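/- For all α, β ∈ ℂ, setting z₀ = ᾱ²+β̄², z₁ = √2(ᾱβ−αβ̄), z₂ = α²+β², one has |z₀| = |z₂| and z₀·z̄₁ + z₁·z̄₂ = 0. Hence every point of the Chiang-type lagrangian 𝓛₂ lies in the zero level set of the SU(2) moment map 𝜇̃̃[z₀:z₁:z₂] = (|z₀|²−|z₂|², −√2·Re(z₀z̄₁+z₁z̄₂), −√2·Im(z₀z̄₁+z₁z̄₂)) (computed on unit-norm representatives). -/

import Mathlib

open Complex

/-- For all `α, β ∈ ℂ`, setting `z₀ = ᾱ² + β̄²`,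
`z₁ = √2(ᾱβ - αβ̄)`, `z₂ = α² + β²`, one has `|z₀| = |z₂|` and `z₀ z̄₁ + z₁ z̄₂ = 0`; hence
every point of the Chiang-type lagrangian lies in the zero level set of the `SU(2)` moment
map `(|z₀|² - |z₂|², -√2 Re (z₀ z̄₁ + z₁ z̄₂), -√2 Im (z₀ z̄₁ + z₁ z̄₂))`. -/
theorem stmt_5 (α β : ℂ)
    (z₀ z₁ z₂ : ℂ)
    (hz₀ : z₀ = (starRingEnd ℂ α) ^ 2 + (starRingEnd ℂ β) ^ 2)
    (hz₁ : z₁ = (Real.sqrt 2 : ℂ) * ((starRingEnd ℂ α) * β - α * (starRingEnd ℂ β)))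
    (hz₂ : z₂ = α ^ 2 + β ^ 2) :
    ‖z₀‖ = ‖z₂‖ ∧
    z₀ * starRingEnd ℂ z₁ + z₁ * starRingEnd ℂ z₂ = 0 ∧
    ‖z₀‖ ^ 2 - ‖z₂‖ ^ 2 = 0 ∧
    -Real.sqrt 2 * (z₀ * starRingEnd ℂ z₁ + z₁ * starRingEnd ℂ z₂).re = 0 ∧
    -Real.sqrt 2 * (z₀ * starRingEnd ℂ z₁ + z₁ * starRingEnd ℂ z₂).im = 0 := by
  have h0 : z₀ = starRingEnd ℂ z₂ := by
    simp [hz₀, hz₂, map_add, map_pow]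
  have h1 : starRingEnd ℂ z₁ = -z₁ := by
    simp only [hz₁, map_mul, map_sub, Complex.conj_conj, Complex.conj_ofReal]
    ring
  have habs : ‖z₀‖ = ‖z₂‖ := by
    rw [h0, Complex.norm_conj]
  have hsum : z₀ * starRingEnd ℂ z₁ + z₁ * starRingEnd ℂ z₂ = 0 := by
    rw [h0, h1]; ring
  refine ⟨habs, hsum, by rw [habs]; ring, by rw [hsum]; simp, by rw [hsum]; simp⟩
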